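/- arXiv:1201.2545 — 2 statements merged into one kernel-verified Lean document; each statement's English description precedes it below -/
import Mathlib

section
/- Let Y_1, Y_2, … be a sequence of independent nonnegative random variables, let z > 0, and define interarrival times X_n = 1/(z + Y_1 + ⋯ + Y_n), n = 1, 2, …, with associated counting process N(t) = sup{n ≥ 0 : X_1 + ⋯ + X_n ≤ t}. If T is a DFR nonnegative random variable independent of the process, then N(T) is d-DFR. -/
open MeasureTheory ProbabilityTheory Filter

variable {Ω : Type*} [MeasurableSpace Ω]

/-- Survival function of a random variable `T`: `F̄_T(t) = P(T > t)`. -/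
noncomputable def surv (μ : Measure Ω) (T : Ω → ℝ) (t : ℝ) : ℝ :=
  (μ {ω | t < T ω}).toReal

/-- `T` has the decreasing failure rate (DFR) property:
`F̄_T(s+z)·F̄_T(t) ≤ F̄_T(t+z)·F̄_T(s)` for all `0 ≤ s ≤ t` and `z ≥ 0`
(log-convexity of the survival function on `[0,∞)`). -/
def IsDFR (μ : Measure Ω) (T : Ω → ℝ) : Prop :=
  ∀ s t z : ℝ, 0 ≤ s → s ≤ t → 0 ≤ z →
    μ {ω | s + z < T ω} * μ {ω | t < T ω} ≤ μ {ω | t + z < T ω} * μ {ω | s < T ω}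

/-- Arrival times: `S n = X 1 + ⋯ + X n` (with 0-based indexing of the
interarrival times, `X i` is the `(i+1)`-st interarrival time), `S 0 = 0`. -/
noncomputable def arr (X : ℕ → Ω → ℝ) (n : ℕ) (ω : Ω) : ℝ :=
  ∑ i ∈ Finset.range n, X i ω

/-- The counting process `N(t) = sup {n ≥ 0 : S n ≤ t}` (valued in `ℕ∞`,
allowing infinitely many arrivals). -/
noncomputable def countN (X : ℕ → Ω → ℝ) (t : ℝ) (ω : Ω) : ℕ∞ :=
  sSup ((fun n : ℕ => (n : ℕ∞)) '' {n : ℕ | arr X n ω ≤ t})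

/-- A (possibly defective) `ℕ∞`-valued random variable `M` is discrete DFR:
`P(M ≥ n+1)² ≤ P(M ≥ n)·P(M ≥ n+2)` for all `n`. -/
def IsdDFR (μ : Measure Ω) (M : Ω → ℕ∞) : Prop :=
  ∀ n : ℕ,
    μ {ω | (n : ℕ∞) + 1 ≤ M ω} ^ 2 ≤
      μ {ω | (n : ℕ∞) ≤ M ω} * μ {ω | (n : ℕ∞) + 2 ≤ M ω}


lemma arr_mono {X : ℕ → Ω → ℝ} (hX : ∀ n ω, 0 ≤ X n ω) (ω : Ω) :
    Monotone (fun n => arr X n ω) := fun m m' h =>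
  Finset.sum_le_sum_of_subset_of_nonneg (Finset.range_subset_range.2 h) (fun i _ _ => hX i ω)

lemma countN_ge_iff {X : ℕ → Ω → ℝ} (hX : ∀ n ω, 0 ≤ X n ω) {t : ℝ} (ht : 0 ≤ t)
    (ω : Ω) (n : ℕ) : (n : ℕ∞) ≤ countN X t ω ↔ arr X n ω ≤ t := by
  constructor
  · intro h
    by_contra hc
    push_neg at hc
    rcases n with _ | m
    · exact absurd (by simpa [arr] using ht) (not_le.2 hc)
    · have hb : countN X t ω ≤ (m : ℕ∞) := by
        apply sSup_le
        rintro a ⟨k, hk, rfl⟩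
        have hkm : k ≤ m := by
          by_contra hkm
          push_neg at hkm
          exact absurd (le_trans (arr_mono hX ω hkm) hk) (not_le.2 hc)
        show ((k:ℕ∞)) ≤ (m:ℕ∞)
        exact_mod_cast hkm
      have : ((m+1 : ℕ) : ℕ∞) ≤ (m : ℕ∞) := le_trans h hb
      have h2 : (m+1 : ℕ) ≤ m := by exact_mod_cast this
      omega
  · intro h
    exact le_sSup ⟨n, h, rfl⟩

noncomputable def Gf (μ : Measure Ω) (T : Ω → ℝ) (u : ℝ) : ENNReal := μ {ω | u ≤ T ω}

lemma Gf_anti (μ : Measure Ω) (T : Ω → ℝ) : Antitone (Gf μ T) :=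
  fun _ _ h => measure_mono fun _ hω => le_trans h hω

lemma Gf_le_surv (μ : Measure Ω) (T : Ω → ℝ) {u u' : ℝ} (h : u' < u) :
    Gf μ T u ≤ μ {ω | u' < T ω} :=
  measure_mono fun _ hω => lt_of_lt_of_le h hω

lemma Gf_tendsto (μ : Measure Ω) [IsFiniteMeasure μ] {T : Ω → ℝ} (hT : Measurable T)
    (c : ℝ) (hc : 0 < c) (u : ℝ) :
    Tendsto (fun k : ℕ => μ {ω | u - c/(k+1) < T ω}) atTop (nhds (Gf μ T u)) := by
  have hmeas : ∀ k : ℕ, MeasurableSet {ω | u - c/((k:ℝ)+1) < T ω} := fun k =>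
    measurableSet_lt measurable_const hT
  have hanti : Antitone (fun k : ℕ => {ω | u - c/((k:ℝ)+1) < T ω}) := by
    intro k k' h ω hω
    simp only [Set.mem_setOf_eq] at *
    have h1 : c/((k':ℝ)+1) ≤ c/((k:ℝ)+1) := by
      apply div_le_div_of_nonneg_left hc.le (by positivity)
      have : (k:ℝ) ≤ (k':ℝ) := by exact_mod_cast h
      linarith
    linarith
  have hinter : (⋂ k : ℕ, {ω | u - c/((k:ℝ)+1) < T ω}) = {ω | u ≤ T ω} := by
    ext ω
    simp only [Set.mem_iInter, Set.mem_setOf_eq]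
    constructor
    · intro h
      by_contra hcon
      push_neg at hcon
      obtain ⟨k, hk⟩ := exists_nat_one_div_lt (div_pos (sub_pos.2 hcon) hc)
      have hk' : c/((k:ℝ)+1) < u - T ω := by
        rw [lt_div_iff₀ hc] at hk
        have he : c/((k:ℝ)+1) = 1/((k:ℝ)+1)*c := by ring
        linarith
      exact absurd (h k) (not_lt.2 (by linarith))
    · intro h k
      have : (0:ℝ) < c/((k:ℝ)+1) := by positivity
      linarith
  have := tendsto_measure_iInter_atTop (fun k => (hmeas k).nullMeasurableSet) hanti
    ⟨0, measure_ne_top μ _⟩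
  rw [hinter] at this
  exact this

lemma Gf_zero (μ : Measure Ω) [IsProbabilityMeasure μ] {T : Ω → ℝ} (hTnn : ∀ ω, 0 ≤ T ω) :
    Gf μ T 0 = 1 := by
  have h : {ω | (0:ℝ) ≤ T ω} = Set.univ := Set.eq_univ_of_forall hTnn
  simp [Gf, h]

lemma Gf_dfr (μ : Measure Ω) [IsProbabilityMeasure μ] {T : Ω → ℝ} (hT : Measurable T)
    (hTnn : ∀ ω, 0 ≤ T ω)
    (hDFR : ∀ s t z : ℝ, 0 ≤ s → s ≤ t → 0 ≤ z →
      μ {ω | s + z < T ω} * μ {ω | t < T ω} ≤ μ {ω | t + z < T ω} * μ {ω | s < T ω})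
    {s t x : ℝ} (hs : 0 ≤ s) (hst : s ≤ t) (hx : 0 ≤ x) :
    Gf μ T (s + x) * Gf μ T t ≤ Gf μ T (t + x) * Gf μ T s := by
  rcases hs.eq_or_lt with hs0 | hs0
  · -- s = 0
    subst hs0
    rw [Gf_zero μ hTnn, mul_one, zero_add]
    rcases hx.eq_or_lt with hx0 | hx0
    · subst hx0
      rw [add_zero]
      exact mul_le_of_le_one_left zero_le (prob_le_one)
    rcases hst.eq_or_lt with ht0 | ht0
    · subst ht0
      rw [zero_add]
      exact mul_le_of_le_one_right zero_le (prob_le_one)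
    have htend := Gf_tendsto μ hT 2 two_pos (t + x)
    apply ge_of_tendsto htend
    obtain ⟨K, hK⟩ := exists_nat_one_div_lt (lt_min ht0 hx0)
    filter_upwards [eventually_ge_atTop K] with k hk
    have hkk : (1:ℝ)/((k:ℝ)+1) ≤ 1/((K:ℝ)+1) := by
      apply one_div_le_one_div_of_le (by positivity)
      have : (K:ℝ) ≤ (k:ℝ) := by exact_mod_cast hk
      linarith
    set ε : ℝ := 1/((k:ℝ)+1) with hεdef
    have hε0 : 0 < ε := by positivity
    have hεt : ε < t := lt_of_le_of_lt hkk (lt_of_lt_of_le hK (min_le_left _ _))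
    have hεx : ε < x := lt_of_le_of_lt hkk (lt_of_lt_of_le hK (min_le_right _ _))
    have hD := hDFR 0 (t - ε) (x - ε) le_rfl (by linarith) (by linarith)
    rw [zero_add] at hD
    have heq : (t - ε) + (x - ε) = (t + x) - 2/((k:ℝ)+1) := by
      rw [hεdef]; ring
    rw [heq] at hD
    calc Gf μ T x * Gf μ T t
        ≤ μ {ω | x - ε < T ω} * μ {ω | t - ε < T ω} :=
          mul_le_mul' (Gf_le_surv μ T (by linarith)) (Gf_le_surv μ T (by linarith))
      _ ≤ μ {ω | (t + x) - 2/((k:ℝ)+1) < T ω} * μ {ω | (0:ℝ) < T ω} := hD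
      _ ≤ μ {ω | (t + x) - 2/((k:ℝ)+1) < T ω} :=
          mul_le_of_le_one_right zero_le (prob_le_one)
  · -- 0 < s
    have htend1 := Gf_tendsto μ hT 1 one_pos (t + x)
    have htend2 := Gf_tendsto μ hT 1 one_pos s
    have hmul := ENNReal.Tendsto.mul htend1 (Or.inr (measure_ne_top μ _)) htend2
      (Or.inr (measure_ne_top μ _))
    apply ge_of_tendsto hmul
    obtain ⟨K, hK⟩ := exists_nat_one_div_lt hs0
    filter_upwards [eventually_ge_atTop K] with k hk
    have hkk : (1:ℝ)/((k:ℝ)+1) ≤ 1/((K:ℝ)+1) := by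
      apply one_div_le_one_div_of_le (by positivity)
      have : (K:ℝ) ≤ (k:ℝ) := by exact_mod_cast hk
      linarith
    set ε : ℝ := 1/((k:ℝ)+1) with hεdef
    have hε0 : 0 < ε := by positivity
    have hεs : ε < s := lt_of_le_of_lt hkk hK
    have hD := hDFR (s - ε) (t - ε) x (by linarith) (by linarith) hx
    have heq : (t - ε) + x = (t + x) - ε := by ring
    rw [heq] at hD
    calc Gf μ T (s + x) * Gf μ T t
        ≤ μ {ω | (s - ε) + x < T ω} * μ {ω | t - ε < T ω} :=
          mul_le_mul' (Gf_le_surv μ T (by linarith)) (Gf_le_surv μ T (by linarith))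
      _ ≤ μ {ω | (t + x) - ε < T ω} * μ {ω | s - ε < T ω} := hD

lemma Gf_sq_le (μ : Measure Ω) [IsProbabilityMeasure μ] {T : Ω → ℝ} (hT : Measurable T)
    (hTnn : ∀ ω, 0 ≤ T ω)
    (hDFR : ∀ s t z : ℝ, 0 ≤ s → s ≤ t → 0 ≤ z →
      μ {ω | s + z < T ω} * μ {ω | t < T ω} ≤ μ {ω | t + z < T ω} * μ {ω | s < T ω})
    {a p q : ℝ} (ha : 0 ≤ a) (hq : 0 ≤ q) (hqp : q ≤ p) :
    Gf μ T (a + p) * Gf μ T (a + p) ≤ Gf μ T (a + p + q) * Gf μ T a := by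
  calc Gf μ T (a + p) * Gf μ T (a + p)
      ≤ Gf μ T (a + q) * Gf μ T (a + p) :=
        mul_le_mul_left (Gf_anti μ T (by linarith)) _
    _ ≤ Gf μ T ((a + p) + q) * Gf μ T a :=
        Gf_dfr μ hT hTnn hDFR ha (by linarith) hq

/-- Let `Y 0, Y 1, …` be independent nonnegative random
variables, let `z > 0`, and define interarrival times
`X n = 1 / (z + Y 0 + ⋯ + Y n)` (mathematically `X_n = 1/(z + Y_1 + ⋯ + Y_n)`),
with counting process `N`. If `T` is a DFR nonnegative random time independent
of the process, then `N(T)` is d-DFR. -/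
theorem stmt9
    (μ : Measure Ω) [IsProbabilityMeasure μ]
    (Y : ℕ → Ω → ℝ) (T : Ω → ℝ) (z : ℝ) (hz : 0 < z)
    (hYmeas : ∀ n, Measurable (Y n)) (hYnonneg : ∀ n ω, 0 ≤ Y n ω)
    (hYindep : iIndepFun Y μ)
    (hTmeas : Measurable T) (hTnonneg : ∀ ω, 0 ≤ T ω)
    (hindep : IndepFun T (fun ω n => Y n ω) μ)
    (hDFR : IsDFR μ T) :
    IsdDFR μ (fun ω =>
      countN (fun n ω' => (z + ∑ i ∈ Finset.range (n + 1), Y i ω')⁻¹) (T ω) ω) := by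
  intro n
  set X : ℕ → Ω → ℝ := fun m ω' => (z + ∑ i ∈ Finset.range (m + 1), Y i ω')⁻¹ with hXdef
  have hXnn : ∀ m ω, 0 ≤ X m ω := fun m ω =>
    inv_nonneg.2 (add_nonneg hz.le (Finset.sum_nonneg fun i _ => hYnonneg i ω))
  have hset : ∀ m : ℕ, {ω | (m : ℕ∞) ≤ countN X (T ω) ω} = {ω | arr X m ω ≤ T ω} := by
    intro m
    ext ω
    exact countN_ge_iff hXnn (hTnonneg ω) ω m
  have hc1 : ((n : ℕ∞) + 1) = ((n + 1 : ℕ) : ℕ∞) := by push_cast; ring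
  have hc2 : ((n : ℕ∞) + 2) = ((n + 2 : ℕ) : ℕ∞) := by push_cast; ring
  simp only [hc1, hc2]
  rw [show {ω | ((n + 1 : ℕ) : ℕ∞) ≤ countN X (T ω) ω} = {ω | arr X (n + 1) ω ≤ T ω} from
      hset (n + 1),
    show {ω | ((n : ℕ)  : ℕ∞) ≤ countN X (T ω) ω} = {ω | arr X n ω ≤ T ω} from hset n,
    show {ω | ((n + 2 : ℕ) : ℕ∞) ≤ countN X (T ω) ω} = {ω | arr X (n + 2) ω ≤ T ω} from
      hset (n + 2)]
  -- the Y-path map and deterministic arrival functional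
  set V : Ω → (ℕ → ℝ) := fun ω i => Y i ω with hVdef
  have hVmeas : Measurable V := measurable_pi_lambda _ fun i => hYmeas i
  set sfun : ℕ → (ℕ → ℝ) → ℝ :=
    fun m v => ∑ i ∈ Finset.range m, (z + ∑ j ∈ Finset.range (i + 1), v j)⁻¹ with hsdef
  have hsmeas : ∀ m, Measurable (sfun m) := fun m =>
    Finset.measurable_sum _ fun i _ =>
      (measurable_const.add (Finset.measurable_sum _ fun j _ => measurable_pi_apply j)).inv
  have harr : ∀ m ω, arr X m ω = sfun m (V ω) := fun m ω => rfl
  -- key disintegration identity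
  have key : ∀ m : ℕ,
      μ {ω | arr X m ω ≤ T ω} = ∫⁻ v, Gf μ T (sfun m v) ∂(μ.map V) := by
    intro m
    have hpair : Measurable (fun ω => (T ω, V ω)) := hTmeas.prodMk hVmeas
    have hsetm : MeasurableSet {p : ℝ × (ℕ → ℝ) | sfun m p.2 ≤ p.1} :=
      measurableSet_le ((hsmeas m).comp measurable_snd) measurable_fst
    have h1 : {ω | arr X m ω ≤ T ω} =
        (fun ω => (T ω, V ω)) ⁻¹' {p : ℝ × (ℕ → ℝ) | sfun m p.2 ≤ p.1} := rfl
    rw [h1, ← Measure.map_apply hpair hsetm,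
      (indepFun_iff_map_prod_eq_prod_map_map hTmeas.aemeasurable hVmeas.aemeasurable).mp hindep,
      Measure.prod_apply_symm hsetm]
    congr 1
    ext v
    have h2 : ((fun x : ℝ => (x, v)) ⁻¹' {p : ℝ × (ℕ → ℝ) | sfun m p.2 ≤ p.1}) =
        Set.Ici (sfun m v) := rfl
    rw [h2, Measure.map_apply hTmeas measurableSet_Ici]
    rfl
  rw [key n, key (n + 1), key (n + 2)]
  -- measurability of the integrands
  have hGmeas : Measurable (Gf μ T) := (Gf_anti μ T).measurable
  have hfm : ∀ m, AEMeasurable (fun v => Gf μ T (sfun m v)) (μ.map V) := fun m =>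
    (hGmeas.comp (hsmeas m)).aemeasurable
  -- a.e. nonnegativity of coordinates under the path law
  have hSmeas : MeasurableSet {v : ℕ → ℝ | ∀ i, 0 ≤ v i} := by
    have h : {v : ℕ → ℝ | ∀ i, 0 ≤ v i} = ⋂ i, {v | 0 ≤ v i} := by ext v; simp
    rw [h]
    exact MeasurableSet.iInter fun i => measurableSet_le measurable_const (measurable_pi_apply i)
  have hae : ∀ᵐ v ∂(μ.map V), ∀ i, 0 ≤ v i := by
    rw [ae_map_iff hVmeas.aemeasurable hSmeas]
    exact ae_of_all _ fun ω i => hYnonneg i ω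
  -- pointwise inequality
  have hsq : ∀ x : ENNReal, x ^ ((1:ℝ)/2) * x ^ ((1:ℝ)/2) = x := by
    intro x
    rw [← pow_two, ← ENNReal.rpow_natCast (x ^ ((1:ℝ)/2)) 2, ← ENNReal.rpow_mul]
    norm_num
  have hpt : ∀ v : ℕ → ℝ, (∀ i, 0 ≤ v i) →
      Gf μ T (sfun (n + 1) v) ≤
        (Gf μ T (sfun n v)) ^ ((1:ℝ)/2) * (Gf μ T (sfun (n + 2) v)) ^ ((1:ℝ)/2) := by
    intro v hv
    have hsum1 : 0 < z + ∑ j ∈ Finset.range (n + 1), v j :=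
      add_pos_of_pos_of_nonneg hz (Finset.sum_nonneg fun j _ => hv j)
    have hsum2 : z + ∑ j ∈ Finset.range (n + 1), v j ≤ z + ∑ j ∈ Finset.range (n + 2), v j :=
      add_le_add_right (Finset.sum_le_sum_of_subset_of_nonneg
        (Finset.range_subset_range.2 (Nat.le_succ (n + 1))) fun j _ _ => hv j) z
    have hq : 0 ≤ (z + ∑ j ∈ Finset.range (n + 2), v j)⁻¹ :=
      inv_nonneg.2 (le_trans hsum1.le hsum2)
    have hqp : (z + ∑ j ∈ Finset.range (n + 2), v j)⁻¹ ≤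
        (z + ∑ j ∈ Finset.range (n + 1), v j)⁻¹ := inv_anti₀ hsum1 hsum2
    have ha : 0 ≤ sfun n v :=
      Finset.sum_nonneg fun i _ =>
        inv_nonneg.2 (add_nonneg hz.le (Finset.sum_nonneg fun j _ => hv j))
    have he1 : sfun (n + 1) v = sfun n v + (z + ∑ j ∈ Finset.range (n + 1), v j)⁻¹ :=
      Finset.sum_range_succ _ n
    have he2 : sfun (n + 2) v = sfun n v + (z + ∑ j ∈ Finset.range (n + 1), v j)⁻¹
        + (z + ∑ j ∈ Finset.range (n + 2), v j)⁻¹ := by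
      have := Finset.sum_range_succ
        (fun i => (z + ∑ j ∈ Finset.range (i + 1), v j)⁻¹) (n + 1)
      have h2 := Finset.sum_range_succ
        (fun i => (z + ∑ j ∈ Finset.range (i + 1), v j)⁻¹) n
      calc sfun (n + 2) v
          = sfun (n + 1) v + (z + ∑ j ∈ Finset.range (n + 2), v j)⁻¹ :=
            Finset.sum_range_succ _ (n + 1)
        _ = sfun n v + (z + ∑ j ∈ Finset.range (n + 1), v j)⁻¹
            + (z + ∑ j ∈ Finset.range (n + 2), v j)⁻¹ := by rw [he1]
    rw [he1, he2]
    have h2 : Gf μ T (sfun n v + (z + ∑ j ∈ Finset.range (n + 1), v j)⁻¹) *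
          Gf μ T (sfun n v + (z + ∑ j ∈ Finset.range (n + 1), v j)⁻¹) ≤
        Gf μ T (sfun n v + (z + ∑ j ∈ Finset.range (n + 1), v j)⁻¹
          + (z + ∑ j ∈ Finset.range (n + 2), v j)⁻¹) * Gf μ T (sfun n v) :=
      Gf_sq_le μ hTmeas hTnonneg hDFR ha hq hqp
    set b := Gf μ T (sfun n v + (z + ∑ j ∈ Finset.range (n + 1), v j)⁻¹) with hb
    set c := Gf μ T (sfun n v + (z + ∑ j ∈ Finset.range (n + 1), v j)⁻¹
      + (z + ∑ j ∈ Finset.range (n + 2), v j)⁻¹) with hc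
    set d := Gf μ T (sfun n v) with hd
    have h3 : b ≤ (c * d) ^ ((1:ℝ)/2) := by
      have h0 : b = (b * b) ^ ((1:ℝ)/2) := by
        rw [← pow_two, ← ENNReal.rpow_natCast (b) 2, ← ENNReal.rpow_mul]
        norm_num
      rw [h0]
      exact ENNReal.rpow_le_rpow h2 (by norm_num)
    calc b ≤ (c * d) ^ ((1:ℝ)/2) := h3
      _ = d ^ ((1:ℝ)/2) * c ^ ((1:ℝ)/2) := by
          rw [ENNReal.mul_rpow_of_nonneg _ _ (by norm_num : (0:ℝ) ≤ 1/2), mul_comm]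
  -- integrate, then Hölder
  have hI1 : (∫⁻ v, Gf μ T (sfun (n + 1) v) ∂(μ.map V)) ≤
      ∫⁻ v, (Gf μ T (sfun n v)) ^ ((1:ℝ)/2) * (Gf μ T (sfun (n + 2) v)) ^ ((1:ℝ)/2)
        ∂(μ.map V) := by
    apply lintegral_mono_ae
    filter_upwards [hae] with v hv
    exact hpt v hv
  have hpq : Real.HolderConjugate 2 2 := Real.HolderConjugate.two_two
  have hold := ENNReal.lintegral_mul_le_Lp_mul_Lq (μ.map V) hpq
    ((hGmeas.comp (hsmeas n)).aemeasurable.pow aemeasurable_const :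
      AEMeasurable (fun v => (Gf μ T (sfun n v)) ^ ((1:ℝ)/2)) (μ.map V))
    ((hGmeas.comp (hsmeas (n + 2))).aemeasurable.pow aemeasurable_const :
      AEMeasurable (fun v => (Gf μ T (sfun (n + 2) v)) ^ ((1:ℝ)/2)) (μ.map V))
  simp only [Pi.mul_apply, ← ENNReal.rpow_mul] at hold
  norm_num [ENNReal.rpow_one] at hold
  have hfinal : (∫⁻ v, Gf μ T (sfun (n + 1) v) ∂(μ.map V)) ≤
      (∫⁻ v, Gf μ T (sfun n v) ∂(μ.map V)) ^ ((1:ℝ)/2) *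
        (∫⁻ v, Gf μ T (sfun (n + 2) v) ∂(μ.map V)) ^ ((1:ℝ)/2) := le_trans hI1 hold
  rw [pow_two]
  calc (∫⁻ v, Gf μ T (sfun (n + 1) v) ∂(μ.map V)) *
        (∫⁻ v, Gf μ T (sfun (n + 1) v) ∂(μ.map V))
      ≤ ((∫⁻ v, Gf μ T (sfun n v) ∂(μ.map V)) ^ ((1:ℝ)/2) *
          (∫⁻ v, Gf μ T (sfun (n + 2) v) ∂(μ.map V)) ^ ((1:ℝ)/2)) *
        ((∫⁻ v, Gf μ T (sfun n v) ∂(μ.map V)) ^ ((1:ℝ)/2) *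
          (∫⁻ v, Gf μ T (sfun (n + 2) v) ∂(μ.map V)) ^ ((1:ℝ)/2)) :=
        mul_le_mul' hfinal hfinal
    _ = (∫⁻ v, Gf μ T (sfun n v) ∂(μ.map V)) *
        (∫⁻ v, Gf μ T (sfun (n + 2) v) ∂(μ.map V)) := by
        rw [mul_mul_mul_comm, hsq, hsq]
end

section
/- Let Y_1, Y_2, … be a sequence of independent nonnegative random variables with P(Y_1 > 0) = 1, and define interarrival times X_n = 1/(Y_1 + ⋯ + Y_n), n = 1, 2, …, with associated counting process N(t) = sup{n ≥ 0 : X_1 + ⋯ + X_n ≤ t}. If T is a DFR nonnegative random variable independent of the process, then N(T) is d-DFR. -/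
open MeasureTheory ProbabilityTheory

variable {Ω : Type*} [MeasurableSpace Ω]

/- ### Auxiliary lemmas -/

lemma aux_surv_iInter (T : Ω → ℝ) (a c : ℝ) (hc : 0 < c) :
    (⋂ k : ℕ, {ω | a - c / (k + 1) < T ω}) = {ω | a ≤ T ω} := by
  ext ω
  simp only [Set.mem_iInter, Set.mem_setOf_eq]
  constructor
  · intro h
    by_contra hlt
    push_neg at hlt
    obtain ⟨k, hk⟩ := exists_nat_one_div_lt (div_pos (sub_pos.mpr hlt) hc)
    rw [div_lt_div_iff₀ (by positivity) hc] at hk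
    have h2 := h k
    have hck : c / ((k:ℝ) + 1) < a - T ω := by
      rw [div_lt_iff₀ (by positivity : (0:ℝ) < (k:ℝ) + 1)]
      linarith
    linarith
  · intro h k
    have : 0 < c / ((k:ℝ) + 1) := by positivity
    linarith

lemma aux_surv_closed (μ : Measure Ω) [IsProbabilityMeasure μ] (T : Ω → ℝ) (hT : Measurable T)
    (a c : ℝ) (hc : 0 < c) :
    μ {ω | a ≤ T ω} = ⨅ k : ℕ, μ {ω | a - c / (k + 1) < T ω} := by
  rw [← aux_surv_iInter T a c hc]
  refine Directed.measure_iInter (fun k => (hT measurableSet_Ioi).nullMeasurableSet)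
    ?_ ⟨0, measure_ne_top μ _⟩
  intro i j
  have key : ∀ l m : ℕ, l ≤ m → {ω | a - c / (m + 1) < T ω} ⊆ {ω | a - c / (l + 1) < T ω} := by
    intro l m hlm ω hω
    simp only [Set.mem_setOf_eq] at hω ⊢
    have : c / ((m:ℝ) + 1) ≤ c / ((l:ℝ) + 1) := by
      apply div_le_div_of_nonneg_left hc.le (by positivity)
      have := (Nat.cast_le (α := ℝ)).mpr hlm
      linarith
    linarith
  exact ⟨max i j, key i (max i j) (le_max_left i j), key j (max i j) (le_max_right i j)⟩

lemma aux_closedDFR (μ : Measure Ω) [IsProbabilityMeasure μ] (T : Ω → ℝ) (hT : Measurable T)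
    (hDFR : IsDFR μ T) (s t z : ℝ) (hs : 0 ≤ s) (hst : s ≤ t) (hz : 0 ≤ z) :
    μ {ω | s + z ≤ T ω} * μ {ω | t ≤ T ω} ≤ μ {ω | t + z ≤ T ω} * μ {ω | s ≤ T ω} := by
  rcases hz.eq_or_lt with rfl | hz
  · simp only [add_zero]
    exact le_of_eq (mul_comm _ _)
  rcases hst.eq_or_lt with rfl | hst
  · exact le_rfl
  set c := min (t - s) z with hcdef
  have hc : 0 < c := lt_min (by linarith) hz
  have h2c : 0 < 2 * c := by linarith
  calc μ {ω | s + z ≤ T ω} * μ {ω | t ≤ T ω}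
      = (⨅ k : ℕ, μ {ω | s + z - c / (k + 1) < T ω}) *
        (⨅ k : ℕ, μ {ω | t - c / (k + 1) < T ω}) := by
        rw [aux_surv_closed μ T hT _ c hc, aux_surv_closed μ T hT _ c hc]
    _ ≤ ⨅ k : ℕ, μ {ω | t + z - 2 * c / (k + 1) < T ω} * μ {ω | s < T ω} := by
        refine le_iInf fun k => ?_
        have hck : c / ((k:ℝ) + 1) ≤ c := by
          rw [div_le_iff₀ (by positivity : (0:ℝ) < (k:ℝ)+1)]
          nlinarith [Nat.cast_nonneg (α := ℝ) k]
        have hckz : c / ((k:ℝ) + 1) ≤ z := hck.trans (min_le_right _ _)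
        have hckts : c / ((k:ℝ) + 1) ≤ t - s := hck.trans (min_le_left _ _)
        have happ := hDFR s (t - c / (k + 1)) (z - c / (k + 1)) hs (by linarith) (by linarith)
        have e1 : s + (z - c / ((k:ℝ) + 1)) = s + z - c / (k + 1) := by ring
        have e2 : t - c / ((k:ℝ) + 1) + (z - c / (k + 1)) = t + z - 2 * c / (k + 1) := by ring
        rw [e1, e2] at happ
        exact le_trans (mul_le_mul' (iInf_le _ k) (iInf_le _ k)) happ
    _ = (⨅ k : ℕ, μ {ω | t + z - 2 * c / (k + 1) < T ω}) * μ {ω | s < T ω} :=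
        (ENNReal.iInf_mul (by simp [measure_ne_top μ _])).symm
    _ ≤ μ {ω | t + z ≤ T ω} * μ {ω | s ≤ T ω} := by
        rw [aux_surv_closed μ T hT (t + z) (2 * c) h2c]
        exact mul_le_mul' le_rfl
          (measure_mono (Set.setOf_subset_setOf.mpr fun ω hω => le_of_lt hω))

lemma aux_countN_le_iff (X : ℕ → Ω → ℝ) (hX : ∀ n ω, 0 ≤ X n ω) (t : ℝ) (ht : 0 ≤ t)
    (ω : Ω) (m : ℕ) :
    (m : ℕ∞) ≤ countN X t ω ↔ arr X m ω ≤ t := by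
  have hmono : ∀ l k : ℕ, l ≤ k → arr X l ω ≤ arr X k ω := by
    intro l k hlk
    exact Finset.sum_le_sum_of_subset_of_nonneg (Finset.range_subset_range.mpr hlk)
      (fun i _ _ => hX i ω)
  constructor
  · intro h
    by_contra hc
    push_neg at hc
    match m with
    | 0 => exact absurd (by simpa [arr] using ht) (not_le.mpr hc)
    | m' + 1 =>
      have hb : countN X t ω ≤ (m' : ℕ∞) := by
        refine sSup_le ?_
        rintro b ⟨k, hk, rfl⟩
        simp only [Set.mem_setOf_eq] at hk
        have hkm : k ≤ m' := by
          by_contra hk'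
          push_neg at hk'
          exact absurd (le_trans (hmono (m' + 1) k hk') hk) (not_le.mpr hc)
        show ((k : ℕ∞) ≤ (m' : ℕ∞))
        exact_mod_cast hkm
      have h1 := h.trans hb
      have h2 : (m' + 1 : ℕ) ≤ m' := by exact_mod_cast h1
      omega
  · intro h
    exact le_sSup ⟨m, h, rfl⟩

/-- Let `Y 0, Y 1, …` be independent nonnegative random
variables with `P(Y_1 > 0) = 1`, and define interarrival times
`X n = 1 / (Y 0 + ⋯ + Y n)` (mathematically `X_n = 1/(Y_1 + ⋯ + Y_n)`),
with counting process `N`. If `T` is a DFR nonnegative random time independent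
of the process, then `N(T)` is d-DFR. -/
theorem stmt10
    (μ : Measure Ω) [IsProbabilityMeasure μ]
    (Y : ℕ → Ω → ℝ) (T : Ω → ℝ)
    (hYmeas : ∀ n, Measurable (Y n)) (hYnonneg : ∀ n ω, 0 ≤ Y n ω)
    (hY0pos : μ {ω | 0 < Y 0 ω} = 1)
    (hYindep : iIndepFun Y μ)
    (hTmeas : Measurable T) (hTnonneg : ∀ ω, 0 ≤ T ω)
    (hindep : IndepFun T (fun ω n => Y n ω) μ)
    (hDFR : IsDFR μ T) :
    IsdDFR μ (fun ω =>
      countN (fun n ω' => (∑ i ∈ Finset.range (n + 1), Y i ω')⁻¹) (T ω) ω) := by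
  classical
  intro n
  set g : ℕ → (ℕ → ℝ) → ℝ :=
    fun m v => ∑ k ∈ Finset.range m, (∑ i ∈ Finset.range (k + 1), v i)⁻¹ with hgdef
  have hgmeas : ∀ m, Measurable (g m) := fun m =>
    Finset.measurable_sum _ fun k _ =>
      (Finset.measurable_sum _ fun i _ => measurable_pi_apply i).inv
  set V : Ω → (ℕ → ℝ) := fun ω i => Y i ω with hVdef
  have hVmeas : Measurable V := measurable_pi_lambda _ hYmeas
  set G : ℝ → ENNReal := fun a => μ {ω | a ≤ T ω} with hGdef
  have hGanti : Antitone G := fun a b hab =>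
    measure_mono (Set.setOf_subset_setOf.mpr fun ω h => hab.trans h)
  have hGmeas : Measurable G := hGanti.measurable
  have hXnn : ∀ k (ω' : Ω), (0:ℝ) ≤ (∑ i ∈ Finset.range (k + 1), Y i ω')⁻¹ := fun k ω' =>
    inv_nonneg.mpr (Finset.sum_nonneg fun i _ => hYnonneg i ω')
  -- identification of the events
  have hsets : ∀ m : ℕ,
      {ω | (m : ℕ∞) ≤ countN (fun k ω' => (∑ i ∈ Finset.range (k + 1), Y i ω')⁻¹) (T ω) ω}
        = {ω | g m (V ω) ≤ T ω} := by
    intro m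
    ext ω
    simp only [Set.mem_setOf_eq]
    exact aux_countN_le_iff _ hXnn (T ω) (hTnonneg ω) ω m
  -- product structure from independence
  have hmap : μ.map (fun ω => (T ω, V ω)) = (μ.map T).prod (μ.map V) :=
    (indepFun_iff_map_prod_eq_prod_map_map hTmeas.aemeasurable hVmeas.aemeasurable).mp hindep
  have key : ∀ m : ℕ, μ {ω | g m (V ω) ≤ T ω} = ∫⁻ v, G (g m v) ∂(μ.map V) := by
    intro m
    have hset : MeasurableSet {p : ℝ × (ℕ → ℝ) | g m p.2 ≤ p.1} :=
      measurableSet_le ((hgmeas m).comp measurable_snd) measurable_fst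
    have h1 : {ω | g m (V ω) ≤ T ω} = (fun ω => (T ω, V ω)) ⁻¹' {p | g m p.2 ≤ p.1} := rfl
    rw [h1, ← Measure.map_apply (hTmeas.prodMk hVmeas) hset, hmap,
      Measure.prod_apply_symm hset]
    refine lintegral_congr fun v => ?_
    have h2 : ((fun x => (x, v)) ⁻¹' {p : ℝ × (ℕ → ℝ) | g m p.2 ≤ p.1}) = Set.Ici (g m v) := rfl
    rw [h2, Measure.map_apply hTmeas measurableSet_Ici]
    rfl
  -- a.e. properties of the mapped measure
  have hms : MeasurableSet {v : ℕ → ℝ | 0 < v 0 ∧ ∀ i, 0 ≤ v i} := by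
    have heq : {v : ℕ → ℝ | 0 < v 0 ∧ ∀ i, 0 ≤ v i}
        = {v : ℕ → ℝ | 0 < v 0} ∩ ⋂ i, {v : ℕ → ℝ | 0 ≤ v i} := by
      ext v; simp [Set.mem_iInter]
    rw [heq]
    exact ((measurable_pi_apply 0) measurableSet_Ioi).inter
      (MeasurableSet.iInter fun i => (measurable_pi_apply i) measurableSet_Ici)
  have hae : ∀ᵐ v ∂(μ.map V), 0 < v 0 ∧ ∀ i, 0 ≤ v i := by
    rw [ae_map_iff hVmeas.aemeasurable hms]
    have h0 : ∀ᵐ ω ∂μ, 0 < Y 0 ω := by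
      have hcompl : μ {ω | 0 < Y 0 ω}ᶜ = 0 :=
        (prob_compl_eq_zero_iff ((hYmeas 0) measurableSet_Ioi)).mpr hY0pos
      exact ae_iff.mpr hcompl
    filter_upwards [h0] with ω hω
    exact ⟨hω, fun i => hYnonneg i ω⟩
  -- pointwise inequality
  have hpt : ∀ v : ℕ → ℝ, 0 < v 0 → (∀ i, 0 ≤ v i) →
      G (g (n + 1) v) ^ 2 ≤ G (g n v) * G (g (n + 2) v) := by
    intro v hv0 hv
    set S : ℕ → ℝ := fun k => ∑ i ∈ Finset.range (k + 1), v i with hSdef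
    have hSpos : ∀ k, 0 < S k := fun k =>
      lt_of_lt_of_le hv0 (Finset.single_le_sum (f := v) (fun i _ => hv i)
        (Finset.mem_range.mpr (Nat.succ_pos k)))
    have hSmono : ∀ k, S k ≤ S (k + 1) := fun k =>
      Finset.sum_le_sum_of_subset_of_nonneg (Finset.range_subset_range.mpr (by omega))
        (fun i _ _ => hv i)
    have hXanti : (S (n + 1))⁻¹ ≤ (S n)⁻¹ :=
      inv_anti₀ (hSpos n) (hSmono n)
    have hstep : ∀ m, g (m + 1) v = g m v + (S m)⁻¹ := fun m =>
      Finset.sum_range_succ _ m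
    have hgnn : 0 ≤ g n v :=
      Finset.sum_nonneg fun k _ => inv_nonneg.mpr (hSpos k).le
    have hzle : (0:ℝ) ≤ (S (n + 1))⁻¹ := inv_nonneg.mpr (hSpos _).le
    have hXnnn : (0:ℝ) ≤ (S n)⁻¹ := inv_nonneg.mpr (hSpos _).le
    have h1 := aux_closedDFR μ T hTmeas hDFR (g n v) (g (n + 1) v) ((S (n + 1))⁻¹)
      hgnn (by rw [hstep n]; linarith) hzle
    have hmid : G (g (n + 1) v) ≤ G (g n v + (S (n + 1))⁻¹) :=
      hGanti (by rw [hstep n]; linarith)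
    have h2 : g (n + 1) v + (S (n + 1))⁻¹ = g (n + 2) v := (hstep (n + 1)).symm
    calc G (g (n + 1) v) ^ 2 = G (g (n + 1) v) * G (g (n + 1) v) := sq _
      _ ≤ G (g n v + (S (n + 1))⁻¹) * G (g (n + 1) v) := mul_le_mul' hmid le_rfl
      _ ≤ G (g (n + 1) v + (S (n + 1))⁻¹) * G (g n v) := h1
      _ = G (g n v) * G (g (n + 2) v) := by rw [h2, mul_comm]
  -- Cauchy–Schwarz step
  have haeineq : ∀ᵐ v ∂(μ.map V),
      G (g (n + 1) v) ≤ (G (g n v)) ^ (1/2 : ℝ) * (G (g (n + 2) v)) ^ (1/2 : ℝ) := by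
    filter_upwards [hae] with v hv
    have h := hpt v hv.1 hv.2
    have h' := ENNReal.rpow_le_rpow h (by norm_num : (0:ℝ) ≤ 1/2)
    rw [ENNReal.mul_rpow_of_nonneg _ _ (by norm_num : (0:ℝ) ≤ 1/2)] at h'
    rwa [← ENNReal.rpow_natCast (G (g (n + 1) v)) 2, ← ENNReal.rpow_mul,
      (by norm_num : ((2:ℕ):ℝ) * (1/2 : ℝ) = 1), ENNReal.rpow_one] at h'
  have hmeasG : ∀ m, AEMeasurable (fun v => G (g m v)) (μ.map V) :=
    fun m => (hGmeas.comp (hgmeas m)).aemeasurable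
  have hH := ENNReal.lintegral_mul_norm_pow_le (μ := μ.map V)
    (hmeasG n) (hmeasG (n + 2)) (by norm_num : (0:ℝ) ≤ 1/2)
    (by norm_num : (0:ℝ) ≤ 1/2) (by norm_num : (1/2 : ℝ) + 1/2 = 1)
  have hint : ∫⁻ v, G (g (n + 1) v) ∂(μ.map V) ≤
      (∫⁻ v, G (g n v) ∂(μ.map V)) ^ (1/2 : ℝ) *
      (∫⁻ v, G (g (n + 2) v) ∂(μ.map V)) ^ (1/2 : ℝ) :=
    le_trans (lintegral_mono_ae haeineq) hH
  have hfinal : (∫⁻ v, G (g (n + 1) v) ∂(μ.map V)) ^ 2 ≤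
      (∫⁻ v, G (g n v) ∂(μ.map V)) * (∫⁻ v, G (g (n + 2) v) ∂(μ.map V)) := by
    calc (∫⁻ v, G (g (n + 1) v) ∂(μ.map V)) ^ 2
        ≤ ((∫⁻ v, G (g n v) ∂(μ.map V)) ^ (1/2 : ℝ) *
           (∫⁻ v, G (g (n + 2) v) ∂(μ.map V)) ^ (1/2 : ℝ)) ^ 2 :=
          pow_le_pow_left' hint 2
      _ = (∫⁻ v, G (g n v) ∂(μ.map V)) * (∫⁻ v, G (g (n + 2) v) ∂(μ.map V)) := by
          rw [mul_pow, ← ENNReal.rpow_natCast (_ ^ (1/2:ℝ)) 2,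
            ← ENNReal.rpow_natCast (_ ^ (1/2:ℝ)) 2, ← ENNReal.rpow_mul, ← ENNReal.rpow_mul]
          norm_num
  -- conclude
  have hc1 : ((n : ℕ∞) + 1) = ((n + 1 : ℕ) : ℕ∞) := by push_cast; ring
  have hc2 : ((n : ℕ∞) + 2) = ((n + 2 : ℕ) : ℕ∞) := by push_cast; ring
  simp only [hc1, hc2]
  rw [hsets (n + 1), hsets n, hsets (n + 2), key (n + 1), key n, key (n + 2)]
  exact hfinal
end
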